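/- In the Greedy time-independent algorithm, two adjacent agents whose goals lie on opposite sides (so each agent's unique greedy next node is the other agent's tail) reach a permanent deadlock: both become requesting with head equal to the other's tail, and no further activation can ever change either mode, so neither agent ever reaches its goal. -/
import Mathlib


inductive Mode where
  | contracted | requesting | extended
deriving DecidableEq

structure Config (A V : Type*) where
  mode : A → Mode
  tail : A → V
  head : A → Option V

def occupied {A V : Type*} (c : Config A V) (v : V) : Prop :=
  (∃ j, c.tail j = v) ∨ (∃ j, c.mode j = Mode.extended ∧ c.head j = some v)

/-- One activation of the Greedy time-independent algorithm, where `gc a` is the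
unique greedy next node of agent `a` (the neighbor nearest to its goal):
a contracted agent sets its head to its greedy node and becomes requesting;
a requesting agent becomes extended if its head is unoccupied, and otherwise
does nothing; an extended agent becomes contracted, moving its tail to its
head. -/
inductive GreedyStep {A V : Type*} (gc : A → V) : Config A V → Config A V → Prop
  | request (c c' : Config A V) (a : A) :
      c.mode a = Mode.contracted →
      c'.mode a = Mode.requesting → c'.head a = some (gc a) → c'.tail a = c.tail a →
      (∀ b, b ≠ a → c'.mode b = c.mode b ∧ c'.tail b = c.tail b ∧ c'.head b = c.head b) →
      GreedyStep gc c c'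
  | extend (c c' : Config A V) (a : A) (u : V) :
      c.mode a = Mode.requesting → c.head a = some u → ¬ occupied c u →
      c'.mode a = Mode.extended → c'.head a = some u → c'.tail a = c.tail a →
      (∀ b, b ≠ a → c'.mode b = c.mode b ∧ c'.tail b = c.tail b ∧ c'.head b = c.head b) →
      GreedyStep gc c c'
  | blocked (c c' : Config A V) (a : A) (u : V) :
      c.mode a = Mode.requesting → c.head a = some u → occupied c u →
      c' = c →
      GreedyStep gc c c'
  | arrive (c c' : Config A V) (a : A) (u : V) :
      c.mode a = Mode.extended → c.head a = some u →
      c'.mode a = Mode.contracted → c'.head a = none → c'.tail a = u →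
      (∀ b, b ≠ a → c'.mode b = c.mode b ∧ c'.tail b = c.tail b ∧ c'.head b = c.head b) →
      GreedyStep gc c c'

/-- Permanent deadlock of the Greedy algorithm: two adjacent agents `a₁` at `u`
and `a₂` at `v` whose greedy next nodes are each other's tails, both requesting
the other's tail, form a configuration that is a fixed point of every
activation; hence neither agent ever reaches its goal. -/
theorem greedy_permanent_deadlock
    {A V : Type*} (gc : A → V) (a₁ a₂ : A) (ha : a₁ ≠ a₂)
    (hA : ∀ a : A, a = a₁ ∨ a = a₂)
    (u v : V) (huv : u ≠ v)
    (hg₁ : gc a₁ = v) (hg₂ : gc a₂ = u)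
    (c₀ : Config A V)
    (hmode : c₀.mode a₁ = Mode.requesting ∧ c₀.mode a₂ = Mode.requesting)
    (htail : c₀.tail a₁ = u ∧ c₀.tail a₂ = v)
    (hhead : c₀.head a₁ = some v ∧ c₀.head a₂ = some u)
    (g₁ g₂ : V) (hgoal₁ : g₁ ≠ u) (hgoal₂ : g₂ ≠ v) :
    ∀ c : Config A V, Relation.ReflTransGen (GreedyStep gc) c₀ c →
      c = c₀ ∧ c.tail a₁ ≠ g₁ ∧ c.tail a₂ ≠ g₂ := by
  obtain ⟨hm₁, hm₂⟩ := hmode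
  obtain ⟨ht₁, ht₂⟩ := htail
  obtain ⟨hh₁, hh₂⟩ := hhead
  have key : ∀ c' : Config A V, GreedyStep gc c₀ c' → c' = c₀ := by
    intro c' hs
    cases hs with
    | request a h1 _ _ _ _ =>
        rcases hA a with rfl | rfl
        · rw [hm₁] at h1; exact absurd h1 (by simp)
        · rw [hm₂] at h1; exact absurd h1 (by simp)
    | extend a w h1 h2 h3 _ _ _ _ =>
        exfalso; apply h3
        rcases hA a with rfl | rfl
        · rw [hh₁] at h2; injection h2 with h2; subst h2
          exact Or.inl ⟨a₂, ht₂⟩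
        · rw [hh₂] at h2; injection h2 with h2; subst h2
          exact Or.inl ⟨a₁, ht₁⟩
    | blocked a w _ _ _ h4 => exact h4
    | arrive a w h1 _ _ _ _ _ =>
        rcases hA a with rfl | rfl
        · rw [hm₁] at h1; exact absurd h1 (by simp)
        · rw [hm₂] at h1; exact absurd h1 (by simp)
  intro c hc
  have hceq : c = c₀ := by
    induction hc with
    | refl => rfl
    | tail h1 h2 ih => rw [ih] at h2; exact key _ h2
  subst hceq
  exact ⟨rfl, by rw [ht₁]; exact fun h => hgoal₁ h.symm,
    by rw [ht₂]; exact fun h => hgoal₂ h.symm⟩
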